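/- For all n ≥ r ≥ 3, if G is an r-uniform hypergraph on n vertices with minimum (r−1)-degree δ_{r−1}(G) ≥ rn/(r+1) − (r−1), then for every (r+1)-coloring of the edges of G there exists a monochromatic component of order at least rn/(r+1). -/

import Mathlib

open Finset

/-- Two vertices are connected by the edge set `E` (of a hypergraph)
if they are joined by a walk of edges from `E`. -/
def connBy {V : Type*} (E : Set (Finset V)) : V → V → Prop :=
  Relation.ReflTransGen (fun u w => ∃ e ∈ E, u ∈ e ∧ w ∈ e)

/-- The connected component of `v` in the hypergraph with edge set `E`. -/
def compOf {V : Type*} (E : Set (Finset V)) (v : V) : Set V :=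
  {u | connBy E u v}

attribute [local instance] Classical.propDecidable

namespace Stmt4Aux

lemma swap_count {n k : ℕ} (P : Fin n → Fin k → Prop) :
    ∑ v : Fin n, #(univ.filter (fun l => P v l)) = ∑ l : Fin k, #(univ.filter (fun v => P v l)) := by
  simp only [Finset.card_filter]
  exact Finset.sum_comm

lemma mem_of_four {α : Type*} [Fintype α] (hc : Fintype.card α = 4)
    {a b c d : α} (hab : a ≠ b) (hac : a ≠ c) (had : a ≠ d) (hbc : b ≠ c) (hbd : b ≠ d)
    (hcd : c ≠ d) (x : α) :
    x = a ∨ x = b ∨ x = c ∨ x = d := by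
  have h4 : ({a,b,c,d} : Finset α).card = 4 := by
    rw [card_insert_of_notMem (by simp [hab, hac, had]),
        card_insert_of_notMem (by simp [hbc, hbd]),
        card_insert_of_notMem (by simp [hcd]), card_singleton]
  have huniv : ({a,b,c,d} : Finset α) = univ :=
    eq_of_subset_of_card_le (subset_univ _) (by rw [h4, card_univ, hc])
  have hx : x ∈ ({a,b,c,d} : Finset α) := huniv ▸ mem_univ x
  simpa using hx

variable {n r : ℕ}

lemma greedy (hr : 3 ≤ r) (hn : r ≤ n)
    (R : Fin (r+1) → Fin n → Fin n → Prop)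
    (hrefl : ∀ l v, R l v v)
    (hsize : ∀ l v, (#(univ.filter (fun u => R l u v)) : ℚ) < r * n / (r+1)) :
    ∃ S : Finset (Fin n), S.card = r - 1 ∧
      #(univ.filter (fun l => ∀ u ∈ S, ∀ w ∈ S, R l u w)) ≤ 2 := by
  have hrq : (0:ℚ) < (r:ℚ) + 1 := by positivity
  have hnn : (0:ℚ) ≤ (n:ℚ) := by positivity
  have hmn : (r:ℚ) * n / (r+1) ≤ (n:ℚ) := by
    rw [div_le_iff₀ hrq]; nlinarith
  have hKlt : ∀ l v, #(univ.filter (fun u => R l u v)) < n := by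
    intro l v
    have h := (hsize l v).trans_le hmn
    exact_mod_cast h
  -- base : a pair killing at least two colors
  have hn0 : 0 < n := by omega
  set v₀ : Fin n := ⟨0, hn0⟩ with hv₀
  have base : ∃ v, v ≠ v₀ ∧ #(univ.filter (fun l => R l v v₀)) + 2 ≤ r + 1 := by
    by_contra hcon
    push_neg at hcon
    have hlow : ∀ v, v ≠ v₀ → r ≤ #(univ.filter (fun l => R l v v₀)) := by
      intro v hv; have := hcon v hv; omega
    have hswap := swap_count (P := fun (v : Fin n) (l : Fin (r+1)) => R l v v₀)
    -- lower bound on the v-sum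
    have hfull : #(univ.filter (fun l => R l v₀ v₀)) = r + 1 := by
      rw [filter_true_of_mem (fun l _ => hrefl l v₀), card_univ, Fintype.card_fin]
    have hlow2 : (r + 1) + (n - 1) * r ≤ ∑ v : Fin n, #(univ.filter (fun l => R l v v₀)) := by
      rw [← Finset.add_sum_erase _ _ (mem_univ v₀), hfull]
      gcongr
      calc (n - 1) * r = #(univ.erase v₀) * r := by
            rw [card_erase_of_mem (mem_univ v₀), card_univ, Fintype.card_fin]
        _ ≤ ∑ v ∈ univ.erase v₀, #(univ.filter (fun l => R l v v₀)) := by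
            rw [← smul_eq_mul]
            exact Finset.card_nsmul_le_sum _ _ _ (fun v hv => hlow v (mem_erase.mp hv).1)
    -- upper bound on the l-sum
    have hup : (∑ l : Fin (r+1), (#(univ.filter (fun v => R l v v₀)) : ℚ)) < (r:ℚ) * n := by
      have h1 : (∑ l : Fin (r+1), (#(univ.filter (fun v => R l v v₀)) : ℚ))
          < ∑ _l : Fin (r+1), (r:ℚ) * n / (r+1) :=
        Finset.sum_lt_sum_of_nonempty univ_nonempty (fun l _ => hsize l v₀)
      have h2 : (∑ _l : Fin (r+1), (r:ℚ) * n / (r+1)) = (r:ℚ) * n := by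
        rw [Finset.sum_const, card_univ, Fintype.card_fin, nsmul_eq_mul]
        push_cast
        field_simp
      linarith
    have hcast : ((r + 1) + (n - 1) * r : ℕ) ≤ ∑ l : Fin (r+1), #(univ.filter (fun v => R l v v₀)) := by
      rw [← hswap]; exact hlow2
    have hcast2 : (((r + 1) + (n - 1) * r : ℕ) : ℚ) < (r:ℚ) * n := by
      calc (((r + 1) + (n - 1) * r : ℕ) : ℚ)
          ≤ ((∑ l : Fin (r+1), #(univ.filter (fun v => R l v v₀)) : ℕ) : ℚ) := by exact_mod_cast hcast
        _ = ∑ l : Fin (r+1), (#(univ.filter (fun v => R l v v₀)) : ℚ) := by push_cast; rfl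
        _ < (r:ℚ) * n := hup
    have hn1 : (1:ℕ) ≤ n := by omega
    have : ((r:ℚ) + 1) + ((n:ℚ) - 1) * r < (r:ℚ) * n := by
      have e : (((n:ℕ) - 1 : ℕ) : ℚ) = (n:ℚ) - 1 := by
        rw [Nat.cast_sub hn1]; norm_num
      push_cast at hcast2
      rw [e] at hcast2
      convert hcast2 using 2 <;> ring
    nlinarith
  obtain ⟨v₁, hv₁, hbase⟩ := base
  -- the inductive step
  have step : ∀ k, 2 ≤ k → k + 1 ≤ r - 1 →
      (∃ C : Finset (Fin n), C.card = k ∧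
        #(univ.filter (fun l => ∀ u ∈ C, ∀ w ∈ C, R l u w)) + k ≤ r + 1) →
      ∃ C : Finset (Fin n), C.card = k + 1 ∧
        #(univ.filter (fun l => ∀ u ∈ C, ∀ w ∈ C, R l u w)) + (k + 1) ≤ r + 1 := by
    intro k hk2 hkr ⟨C, hCc, hCU⟩
    by_cases hcase : #(univ.filter (fun l => ∀ u ∈ C, ∀ w ∈ C, R l u w)) + (k+1) ≤ r + 1
    · have hCne : ¬ (univ : Finset (Fin n)) ⊆ C := by
        intro h
        have := card_le_card h
        rw [card_univ, Fintype.card_fin] at this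
        omega
      obtain ⟨v, -, hv⟩ := not_subset.mp hCne
      refine ⟨insert v C, by rw [card_insert_of_notMem hv, hCc], ?_⟩
      have hsub : univ.filter (fun l => ∀ u ∈ insert v C, ∀ w ∈ insert v C, R l u w)
          ⊆ univ.filter (fun l => ∀ u ∈ C, ∀ w ∈ C, R l u w) := by
        intro l hl
        have hcl := (mem_filter.mp hl).2
        exact mem_filter.mpr ⟨mem_univ _,
          fun u hu w hw => hcl u (mem_insert_of_mem hu) w (mem_insert_of_mem hw)⟩
      have := card_le_card hsub
      omega
    · have hUpos : 0 < #(univ.filter (fun l => ∀ u ∈ C, ∀ w ∈ C, R l u w)) := by omega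
      obtain ⟨l₀, hl₀⟩ := card_pos.mp hUpos
      have hCpos : C.Nonempty := card_pos.mp (by omega)
      obtain ⟨c, hc⟩ := hCpos
      have hcl₀ : ∀ u ∈ C, ∀ w ∈ C, R l₀ u w := (mem_filter.mp hl₀).2
      have hnsub : ¬ ((univ : Finset (Fin n)) ⊆ univ.filter (fun u => R l₀ u c)) := by
        intro h
        have := card_le_card h
        rw [card_univ, Fintype.card_fin] at this
        have := hKlt l₀ c
        omega
      obtain ⟨v, -, hv⟩ := not_subset.mp hnsub
      have hvC : v ∉ C := fun h => hv (mem_filter.mpr ⟨mem_univ _, hcl₀ v h c hc⟩)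
      refine ⟨insert v C, by rw [card_insert_of_notMem hvC, hCc], ?_⟩
      have hsub : univ.filter (fun l => ∀ u ∈ insert v C, ∀ w ∈ insert v C, R l u w)
          ⊆ (univ.filter (fun l => ∀ u ∈ C, ∀ w ∈ C, R l u w)).erase l₀ := by
        intro l hl
        have hcl := (mem_filter.mp hl).2
        refine mem_erase.mpr ⟨?_, mem_filter.mpr ⟨mem_univ _,
          fun u hu w hw => hcl u (mem_insert_of_mem hu) w (mem_insert_of_mem hw)⟩⟩
        rintro rfl
        exact hv (mem_filter.mpr ⟨mem_univ _, hcl v (mem_insert_self _ _) c (mem_insert_of_mem hc)⟩)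
      have h1 := card_le_card hsub
      rw [card_erase_of_mem hl₀] at h1
      omega
  have main : ∀ k, 2 ≤ k → k ≤ r - 1 → ∃ C : Finset (Fin n), C.card = k ∧
      #(univ.filter (fun l => ∀ u ∈ C, ∀ w ∈ C, R l u w)) + k ≤ r + 1 := by
    intro k hk2
    induction k, hk2 using Nat.le_induction with
    | base =>
      intro _
      refine ⟨{v₁, v₀}, card_pair hv₁, ?_⟩
      have hsub : univ.filter (fun l => ∀ u ∈ ({v₁, v₀} : Finset (Fin n)), ∀ w ∈ ({v₁, v₀} : Finset (Fin n)), R l u w)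
          ⊆ univ.filter (fun l => R l v₁ v₀) := by
        intro l hl
        have hcl := (mem_filter.mp hl).2
        exact mem_filter.mpr ⟨mem_univ _, hcl v₁ (by simp) v₀ (by simp)⟩
      have := card_le_card hsub
      omega
    | succ k hk ih =>
      intro hk1
      exact step k hk hk1 (ih (by omega))
  obtain ⟨S, hSc, hSU⟩ := main (r-1) (by omega) le_rfl
  exact ⟨S, hSc, by omega⟩





lemma count_final (hn : 0 < n)
    (R : Fin (r+1) → Fin n → Fin n → Prop)
    (hsize : ∀ l v, (#(univ.filter (fun u => R l u v)) : ℚ) < r * n / (r+1))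
    (pt : Fin (r+1) → Fin n)
    (hcov : ∀ v : Fin n, ∃ ls, ∀ l, ¬ R l v (pt l) → l = ls) : False := by
  have covcard : ∀ v : Fin n, r ≤ #(univ.filter (fun l => R l v (pt l))) := by
    intro v
    obtain ⟨ls, hls⟩ := hcov v
    have h1 : univ.filter (fun l => ¬ R l v (pt l)) ⊆ {ls} := by
      intro l hl
      rw [mem_singleton]
      exact hls l (mem_filter.mp hl).2
    have h2 := card_le_card h1
    rw [card_singleton] at h2
    have h3 := Finset.card_filter_add_card_filter_not
      (s := (univ : Finset (Fin (r+1)))) (p := fun l => R l v (pt l))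
    rw [card_univ, Fintype.card_fin] at h3
    omega
  have lower : n * r ≤ ∑ l : Fin (r+1), #(univ.filter (fun v => R l v (pt l))) := by
    rw [← swap_count (P := fun v l => R l v (pt l))]
    calc n * r = ∑ _v : Fin n, r := by rw [Finset.sum_const, card_univ, Fintype.card_fin, smul_eq_mul]
      _ ≤ ∑ v : Fin n, #(univ.filter (fun l => R l v (pt l))) :=
          Finset.sum_le_sum (fun v _ => covcard v)
  have upper : (∑ l : Fin (r+1), (#(univ.filter (fun v => R l v (pt l))) : ℚ)) < (r:ℚ) * n := by
    have h1 : (∑ l : Fin (r+1), (#(univ.filter (fun v => R l v (pt l))) : ℚ))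
        < ∑ _l : Fin (r+1), (r:ℚ) * n / (r+1) :=
      Finset.sum_lt_sum_of_nonempty univ_nonempty (fun l _ => hsize l (pt l))
    have h2 : (∑ _l : Fin (r+1), (r:ℚ) * n / (r+1)) = (r:ℚ) * n := by
      rw [Finset.sum_const, card_univ, Fintype.card_fin, nsmul_eq_mul]
      push_cast
      field_simp
    linarith
  have hcast : ((n * r : ℕ) : ℚ) ≤ ∑ l : Fin (r+1), (#(univ.filter (fun v => R l v (pt l))) : ℚ) := by
    calc ((n * r : ℕ) : ℚ) ≤ ((∑ l : Fin (r+1), #(univ.filter (fun v => R l v (pt l))) : ℕ) : ℚ) := by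
          exact_mod_cast lower
      _ = _ := by push_cast; rfl
  push_cast at hcast
  nlinarith




lemma endgame4 (hr4 : 4 ≤ r)
    (R : Fin (r+1) → Fin n → Fin n → Prop)
    (hrefl : ∀ l v, R l v v)
    (hsymm : ∀ {l : Fin (r+1)} {u v : Fin n}, R l u v → R l v u)
    (htrans : ∀ {l : Fin (r+1)} {u v w : Fin n}, R l u v → R l v w → R l u w)
    (hU2 : ∀ T : Finset (Fin n), T.card = r - 1 →
      ∃ l₁ l₂, l₁ ≠ l₂ ∧ (∀ u ∈ T, ∀ w ∈ T, R l₁ u w) ∧ (∀ u ∈ T, ∀ w ∈ T, R l₂ u w))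
    (S : Finset (Fin n)) (hScard : S.card = r - 1)
    (i j : Fin (r+1)) (hij : i ≠ j)
    (hSi : ∀ u ∈ S, ∀ w ∈ S, R i u w) (hSj : ∀ u ∈ S, ∀ w ∈ S, R j u w)
    (hOnly : ∀ l, (∀ u ∈ S, ∀ w ∈ S, R l u w) → l = i ∨ l = j)
    (s₀ : Fin n) (hs₀ : s₀ ∈ S)
    (c₀ : Fin n) (hc₀S : c₀ ∉ S) (hc₀i : R i c₀ s₀) (hc₀j : ¬ R j c₀ s₀) :
    ∃ pt : Fin (r+1) → Fin n,
      ∀ v : Fin n, ∃ ls, ∀ l, ¬ R l v (pt l) → l = ls := by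
  have hSAi : ∀ s ∈ S, R i s s₀ := fun s hs => hSi s hs s₀ hs₀
  have hSAj : ∀ s ∈ S, R j s s₀ := fun s hs => hSj s hs s₀ hs₀
  have hpick1 : ∀ s ∈ S, (S.erase s).Nonempty := by
    intro s hs
    apply card_pos.mp
    rw [card_erase_of_mem hs, hScard]
    omega
  have hpick2 : ∀ s ∈ S, ∀ t ∈ S, t ≠ s → ((S.erase s).erase t).Nonempty := by
    intro s hs t ht hts
    apply card_pos.mp
    rw [card_erase_of_mem (mem_erase.mpr ⟨hts, ht⟩), card_erase_of_mem hs, hScard]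
    omega
  have hcardT : ∀ v, v ∉ S → ∀ s ∈ S, (insert v (S.erase s)).card = r - 1 := by
    intro v hv s hs
    rw [card_insert_of_notMem (fun h => hv (mem_of_mem_erase h)), card_erase_of_mem hs, hScard]
    omega
  -- the injection s ↦ f s from S onto colors outside {i,j}
  have hs_exists : ∀ s : Fin n, ∃ l, s ∈ S → ((l ≠ i ∧ l ≠ j) ∧
      (∀ u ∈ insert c₀ (S.erase s), ∀ w ∈ insert c₀ (S.erase s), R l u w)) := by
    intro s
    by_cases hs : s ∈ S
    · obtain ⟨l₁, l₂, hne, hcl₁, hcl₂⟩ := hU2 (insert c₀ (S.erase s)) (hcardT c₀ hc₀S s hs)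
      have hnotj : ∀ l, (∀ u ∈ insert c₀ (S.erase s), ∀ w ∈ insert c₀ (S.erase s), R l u w) →
          l ≠ j := by
        intro l hcl hlj
        subst hlj
        obtain ⟨s', hs'⟩ := hpick1 s hs
        exact hc₀j (htrans (hcl c₀ (mem_insert_self _ _) s' (mem_insert_of_mem hs'))
          (hSAj s' (mem_of_mem_erase hs')))
      by_cases hl₁i : l₁ = i
      · refine ⟨l₂, fun _ => ⟨⟨?_, hnotj l₂ hcl₂⟩, hcl₂⟩⟩
        rw [← hl₁i]; exact hne.symm
      · exact ⟨l₁, fun _ => ⟨⟨hl₁i, hnotj l₁ hcl₁⟩, hcl₁⟩⟩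
    · exact ⟨i, fun h => absurd h hs⟩
  choose f hf using hs_exists
  have hfi : ∀ s ∈ S, f s ≠ i := fun s hs => ((hf s hs).1).1
  have hfj : ∀ s ∈ S, f s ≠ j := fun s hs => ((hf s hs).1).2
  have hfcl : ∀ s (hs : s ∈ S), ∀ u ∈ insert c₀ (S.erase s), ∀ w ∈ insert c₀ (S.erase s),
      R (f s) u w := fun s hs => (hf s hs).2
  have hfinj : ∀ s₁ ∈ S, ∀ s₂ ∈ S, f s₁ = f s₂ → s₁ = s₂ := by
    intro s₁ h1 s₂ h2 heq
    by_contra hne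
    have hall : ∀ t ∈ S, R (f s₁) t c₀ := by
      intro t ht
      by_cases hts : t = s₁
      · subst hts
        have := hfcl s₂ h2 t (mem_insert_of_mem (mem_erase.mpr ⟨hne, h1⟩)) c₀ (mem_insert_self _ _)
        rwa [← heq] at this
      · exact hfcl s₁ h1 t (mem_insert_of_mem (mem_erase.mpr ⟨hts, ht⟩)) c₀ (mem_insert_self _ _)
    have hclS : ∀ u ∈ S, ∀ w ∈ S, R (f s₁) u w :=
      fun u hu w hw => htrans (hall u hu) (hsymm (hall w hw))
    rcases hOnly _ hclS with h | h
    · exact hfi s₁ h1 h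
    · exact hfj s₁ h1 h
  have himg : S.image f = (univ.erase j).erase i := by
    apply eq_of_subset_of_card_le
    · intro l hl
      obtain ⟨s, hs, rfl⟩ := mem_image.mp hl
      exact mem_erase.mpr ⟨hfi s hs, mem_erase.mpr ⟨hfj s hs, mem_univ _⟩⟩
    · rw [card_erase_of_mem (mem_erase.mpr ⟨hij, mem_univ i⟩), card_erase_of_mem (mem_univ j),
        card_univ, Fintype.card_fin,
        card_image_of_injOn (fun s₁ h1 s₂ h2 heq => hfinj s₁ h1 s₂ h2 heq), hScard]
      omega
  have hslx : ∀ l : Fin (r+1), ∃ s, (l ≠ i ∧ l ≠ j) → (s ∈ S ∧ f s = l) := by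
    intro l
    by_cases hl : l ≠ i ∧ l ≠ j
    · have hmem : l ∈ (univ.erase j).erase i := mem_erase.mpr ⟨hl.1, mem_erase.mpr ⟨hl.2, mem_univ _⟩⟩
      rw [← himg] at hmem
      obtain ⟨s, hs, hfs⟩ := mem_image.mp hmem
      exact ⟨s, fun _ => ⟨hs, hfs⟩⟩
    · exact ⟨s₀, fun h => absurd h hl⟩
  choose sl hsl using hslx
  have hslS : ∀ l, l ≠ i → l ≠ j → sl l ∈ S := fun l h1 h2 => (hsl l ⟨h1, h2⟩).1
  have hslf : ∀ l, l ≠ i → l ≠ j → f (sl l) = l := fun l h1 h2 => (hsl l ⟨h1, h2⟩).2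
  have hP2 : ∀ l, l ≠ i → l ≠ j → ∀ s' ∈ S, s' ≠ sl l → R l s' c₀ := by
    intro l h1 h2 s' hs' hne
    have := hfcl (sl l) (hslS l h1 h2) s' (mem_insert_of_mem (mem_erase.mpr ⟨hne, hs'⟩))
      c₀ (mem_insert_self _ _)
    rwa [hslf l h1 h2] at this
  have hP4 : ∀ l, l ≠ i → l ≠ j → ¬ R l (sl l) c₀ := by
    intro l h1 h2 hR
    have hall : ∀ t ∈ S, R l t c₀ := by
      intro t ht
      by_cases hts : t = sl l
      · rwa [hts]
      · exact hP2 l h1 h2 t ht hts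
    have hclS : ∀ u ∈ S, ∀ w ∈ S, R l u w :=
      fun u hu w hw => htrans (hall u hu) (hsymm (hall w hw))
    rcases hOnly l hclS with h | h
    · exact h1 h
    · exact h2 h
  have hP3 : ∀ l₁, l₁ ≠ i → l₁ ≠ j → ∀ l₂, l₂ ≠ i → l₂ ≠ j → sl l₁ = sl l₂ → l₁ = l₂ := by
    intro l₁ h1i h1j l₂ h2i h2j heq
    rw [← hslf l₁ h1i h1j, ← hslf l₂ h2i h2j, heq]
  -- L1 : every vertex is in A_i ∪ A_j
  have L1 : ∀ v : Fin n, ¬ R i v s₀ → ¬ R j v s₀ → False := by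
    intro v hvi hvj
    have hvS : v ∉ S := fun h => hvi (hSAi v h)
    obtain ⟨l₁, l₂, hne, hcl₁, hcl₂⟩ := hU2 (insert v (S.erase s₀)) (hcardT v hvS s₀ hs₀)
    have key : ∀ l, (∀ u ∈ insert v (S.erase s₀), ∀ w ∈ insert v (S.erase s₀), R l u w) →
        (l ≠ i ∧ l ≠ j) ∧ sl l = s₀ := by
      intro l hcl
      obtain ⟨s', hs'⟩ := hpick1 s₀ hs₀
      have hs'S : s' ∈ S := mem_of_mem_erase hs'
      have hvs' : R l v s' := hcl v (mem_insert_self _ _) s' (mem_insert_of_mem hs')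
      have hli : l ≠ i := by rintro rfl; exact hvi (htrans hvs' (hSAi s' hs'S))
      have hlj : l ≠ j := by rintro rfl; exact hvj (htrans hvs' (hSAj s' hs'S))
      refine ⟨⟨hli, hlj⟩, ?_⟩
      by_contra hsl₀
      have hslT : sl l ∈ insert v (S.erase s₀) :=
        mem_insert_of_mem (mem_erase.mpr ⟨hsl₀, hslS l hli hlj⟩)
      obtain ⟨s'', hs''⟩ := hpick2 s₀ hs₀ (sl l) (hslS l hli hlj) hsl₀
      have hs''e : s'' ∈ S.erase s₀ := mem_of_mem_erase hs''
      have hs''T : s'' ∈ insert v (S.erase s₀) := mem_insert_of_mem hs''e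
      have h1 : R l (sl l) s'' := hcl _ hslT _ hs''T
      have h2 : R l s'' c₀ :=
        hP2 l hli hlj s'' (mem_of_mem_erase hs''e) (mem_erase.mp hs'').1
      exact hP4 l hli hlj (htrans h1 h2)
    exact hne (hP3 l₁ (key l₁ hcl₁).1.1 (key l₁ hcl₁).1.2 l₂ (key l₂ hcl₂).1.1 (key l₂ hcl₂).1.2
      ((key l₁ hcl₁).2.trans (key l₂ hcl₂).2.symm))
  -- L2 : X is inside every B_l
  have L2 : ∀ v, R i v s₀ → ¬ R j v s₀ → ∀ l, l ≠ i → l ≠ j → R l v c₀ := by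
    intro v hvi hvj l hli hlj
    by_cases hvc : v = c₀
    · rw [hvc]; exact hrefl l c₀
    have hvS : v ∉ S := fun h => hvj (hSAj v h)
    have hslmem := hslS l hli hlj
    obtain ⟨l₁, l₂, hne, hcl₁, hcl₂⟩ := hU2 (insert v (S.erase (sl l))) (hcardT v hvS _ hslmem)
    have key : ∀ l', (∀ u ∈ insert v (S.erase (sl l)), ∀ w ∈ insert v (S.erase (sl l)), R l' u w) →
        l' = i ∨ l' = l := by
      intro l' hcl
      obtain ⟨s', hs'⟩ := hpick1 (sl l) hslmem
      have hs'S : s' ∈ S := mem_of_mem_erase hs'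
      have hl'j : l' ≠ j := by
        rintro rfl
        exact hvj (htrans (hcl v (mem_insert_self _ _) s' (mem_insert_of_mem hs')) (hSAj s' hs'S))
      by_cases hl'i : l' = i
      · exact Or.inl hl'i
      by_cases hl'l : l' = l
      · exact Or.inr hl'l
      exfalso
      have hsll' : sl l' ≠ sl l := fun h => hl'l (hP3 l' hl'i hl'j l hli hlj h)
      have hsl'F : sl l' ∈ insert v (S.erase (sl l)) :=
        mem_insert_of_mem (mem_erase.mpr ⟨hsll', hslS l' hl'i hl'j⟩)
      obtain ⟨s'', hs''⟩ := hpick2 (sl l) hslmem (sl l') (hslS l' hl'i hl'j) hsll'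
      have hs''e : s'' ∈ S.erase (sl l) := mem_of_mem_erase hs''
      have h1 : R l' (sl l') s'' := hcl _ hsl'F _ (mem_insert_of_mem hs''e)
      have h2 : R l' s'' c₀ :=
        hP2 l' hl'i hl'j s'' (mem_of_mem_erase hs''e) (mem_erase.mp hs'').1
      exact hP4 l' hl'i hl'j (htrans h1 h2)
    have hcll : ∀ u ∈ insert v (S.erase (sl l)), ∀ w ∈ insert v (S.erase (sl l)), R l u w := by
      rcases key l₁ hcl₁ with h1 | h1
      · rcases key l₂ hcl₂ with h2 | h2
        · exact absurd (h1.trans h2.symm) hne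
        · rwa [h2] at hcl₂
      · rwa [h1] at hcl₁
    obtain ⟨s', hs'⟩ := hpick1 (sl l) hslmem
    have h1 : R l v s' := hcll v (mem_insert_self _ _) s' (mem_insert_of_mem hs')
    have h2 : R l s' c₀ := hP2 l hli hlj s' (mem_of_mem_erase hs') (mem_erase.mp hs').1
    exact htrans h1 h2
  -- L3 : Y is inside every B_l
  have L3 : ∀ v, ¬ R i v s₀ → R j v s₀ → ∀ l, l ≠ i → l ≠ j → R l v c₀ := by
    intro v hvi hvj l hli hlj
    have hvS : v ∉ S := fun h => hvi (hSAi v h)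
    have hslmem := hslS l hli hlj
    obtain ⟨l₁, l₂, hne, hcl₁, hcl₂⟩ := hU2 (insert v (S.erase (sl l))) (hcardT v hvS _ hslmem)
    have key : ∀ l', (∀ u ∈ insert v (S.erase (sl l)), ∀ w ∈ insert v (S.erase (sl l)), R l' u w) →
        l' = j ∨ l' = l := by
      intro l' hcl
      obtain ⟨s', hs'⟩ := hpick1 (sl l) hslmem
      have hs'S : s' ∈ S := mem_of_mem_erase hs'
      have hl'i : l' ≠ i := by
        rintro rfl
        exact hvi (htrans (hcl v (mem_insert_self _ _) s' (mem_insert_of_mem hs')) (hSAi s' hs'S))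
      by_cases hl'j : l' = j
      · exact Or.inl hl'j
      by_cases hl'l : l' = l
      · exact Or.inr hl'l
      exfalso
      have hsll' : sl l' ≠ sl l := fun h => hl'l (hP3 l' hl'i hl'j l hli hlj h)
      have hsl'F : sl l' ∈ insert v (S.erase (sl l)) :=
        mem_insert_of_mem (mem_erase.mpr ⟨hsll', hslS l' hl'i hl'j⟩)
      obtain ⟨s'', hs''⟩ := hpick2 (sl l) hslmem (sl l') (hslS l' hl'i hl'j) hsll'
      have hs''e : s'' ∈ S.erase (sl l) := mem_of_mem_erase hs''
      have h1 : R l' (sl l') s'' := hcl _ hsl'F _ (mem_insert_of_mem hs''e)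
      have h2 : R l' s'' c₀ :=
        hP2 l' hl'i hl'j s'' (mem_of_mem_erase hs''e) (mem_erase.mp hs'').1
      exact hP4 l' hl'i hl'j (htrans h1 h2)
    have hcll : ∀ u ∈ insert v (S.erase (sl l)), ∀ w ∈ insert v (S.erase (sl l)), R l u w := by
      rcases key l₁ hcl₁ with h1 | h1
      · rcases key l₂ hcl₂ with h2 | h2
        · exact absurd (h1.trans h2.symm) hne
        · rwa [h2] at hcl₂
      · rwa [h1] at hcl₁
    obtain ⟨s', hs'⟩ := hpick1 (sl l) hslmem
    have h1 : R l v s' := hcll v (mem_insert_self _ _) s' (mem_insert_of_mem hs')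
    have h2 : R l s' c₀ := hP2 l hli hlj s' (mem_of_mem_erase hs') (mem_erase.mp hs').1
    exact htrans h1 h2
  -- L4 : a vertex of D misses at most one B_l
  have L4 : ∀ v, R i v s₀ → R j v s₀ → ∀ la, la ≠ i → la ≠ j → ∀ lb, lb ≠ i → lb ≠ j →
      la ≠ lb → ¬ R la v c₀ → ¬ R lb v c₀ → False := by
    intro v hvi hvj la hlai hlaj lb hlbi hlbj hlab hnRa hnRb
    have hslab : sl la ≠ sl lb := fun h => hlab (hP3 la hlai hlaj lb hlbi hlbj h)
    by_cases hvS : v ∈ S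
    · by_cases hvsla : v = sl la
      · exact hnRb (hP2 lb hlbi hlbj v hvS (by rw [hvsla]; exact hslab))
      · exact hnRa (hP2 la hlai hlaj v hvS hvsla)
    · have hvc : v ≠ c₀ := by intro hvc2; rw [hvc2] at hnRa; exact hnRa (hrefl la c₀)
      have hcard : (insert v (insert c₀ ((S.erase (sl la)).erase (sl lb)))).card = r - 1 := by
        have hin : sl lb ∈ S.erase (sl la) :=
          mem_erase.mpr ⟨fun h => hslab h.symm, hslS lb hlbi hlbj⟩
        rw [card_insert_of_notMem, card_insert_of_notMem, card_erase_of_mem hin,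
          card_erase_of_mem (hslS la hlai hlaj), hScard]
        · omega
        · intro h
          exact hc₀S (mem_of_mem_erase (mem_of_mem_erase h))
        · intro h
          rcases mem_insert.mp h with h | h
          · exact hvc h
          · exact hvS (mem_of_mem_erase (mem_of_mem_erase h))
      obtain ⟨l₁, l₂, hne, hcl₁, hcl₂⟩ := hU2 _ hcard
      obtain ⟨s'', hs''⟩ := hpick2 (sl la) (hslS la hlai hlaj) (sl lb) (hslS lb hlbi hlbj)
        (fun h => hslab h.symm)
      have hs''S : s'' ∈ S := mem_of_mem_erase (mem_of_mem_erase hs'')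
      have hs''F : s'' ∈ insert v (insert c₀ ((S.erase (sl la)).erase (sl lb))) :=
        mem_insert_of_mem (mem_insert_of_mem hs'')
      have hc₀F : c₀ ∈ insert v (insert c₀ ((S.erase (sl la)).erase (sl lb))) :=
        mem_insert_of_mem (mem_insert_self _ _)
      have hvF : v ∈ insert v (insert c₀ ((S.erase (sl la)).erase (sl lb))) := mem_insert_self _ _
      have key : ∀ l', (∀ u ∈ insert v (insert c₀ ((S.erase (sl la)).erase (sl lb))),
          ∀ w ∈ insert v (insert c₀ ((S.erase (sl la)).erase (sl lb))), R l' u w) → l' = i := by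
        intro l' hcl
        have hl'j : l' ≠ j := by
          rintro rfl
          exact hc₀j (htrans (hcl c₀ hc₀F s'' hs''F) (hSAj s'' hs''S))
        by_cases hl'i : l' = i
        · exact hl'i
        exfalso
        have hRvc : R l' v c₀ := hcl v hvF c₀ hc₀F
        have hl'a : l' ≠ la := by rintro rfl; exact hnRa hRvc
        have hl'b : l' ≠ lb := by rintro rfl; exact hnRb hRvc
        have hsl'F : sl l' ∈ insert v (insert c₀ ((S.erase (sl la)).erase (sl lb))) := by
          refine mem_insert_of_mem (mem_insert_of_mem (mem_erase.mpr ⟨?_, mem_erase.mpr ⟨?_, hslS l' hl'i hl'j⟩⟩))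
          · exact fun h => hl'b (hP3 l' hl'i hl'j lb hlbi hlbj h)
          · exact fun h => hl'a (hP3 l' hl'i hl'j la hlai hlaj h)
        exact hP4 l' hl'i hl'j (hcl (sl l') hsl'F c₀ hc₀F)
      exact hne ((key l₁ hcl₁).trans (key l₂ hcl₂).symm)
  -- assemble the covering assignment
  refine ⟨fun l => if l = i ∨ l = j then s₀ else c₀, ?_⟩
  have hmiss : ∀ (v : Fin n) (l : Fin (r+1)), ¬ R l v (if l = i ∨ l = j then s₀ else c₀) →
      (l = i ∧ ¬ R i v s₀) ∨ (l = j ∧ ¬ R j v s₀) ∨ (l ≠ i ∧ l ≠ j ∧ ¬ R l v c₀) := by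
    intro v l h
    by_cases h1 : l = i
    · subst h1; rw [if_pos (Or.inl rfl)] at h; exact Or.inl ⟨rfl, h⟩
    by_cases h2 : l = j
    · subst h2; rw [if_pos (Or.inr rfl)] at h; exact Or.inr (Or.inl ⟨rfl, h⟩)
    · rw [if_neg (by tauto)] at h; exact Or.inr (Or.inr ⟨h1, h2, h⟩)
  intro v
  by_cases hvi : R i v s₀
  · by_cases hvj : R j v s₀
    · by_cases hall : ∀ l, l ≠ i → l ≠ j → R l v c₀
      · refine ⟨i, fun l hl => ?_⟩
        rcases hmiss v l hl with ⟨h1, -⟩ | ⟨-, h2⟩ | ⟨h1, h2, h3⟩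
        · exact h1
        · exact absurd hvj h2
        · exact absurd (hall l h1 h2) h3
      · push_neg at hall
        obtain ⟨la, hlai, hlaj, hnRa⟩ := hall
        refine ⟨la, fun l hl => ?_⟩
        rcases hmiss v l hl with ⟨-, h2⟩ | ⟨-, h2⟩ | ⟨h1, h2, h3⟩
        · exact absurd hvi h2
        · exact absurd hvj h2
        · by_contra hne
          exact L4 v hvi hvj l h1 h2 la hlai hlaj hne h3 hnRa
    · refine ⟨j, fun l hl => ?_⟩
      rcases hmiss v l hl with ⟨-, h2⟩ | ⟨h1, -⟩ | ⟨h1, h2, h3⟩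
      · exact absurd hvi h2
      · exact h1
      · exact absurd (L2 v hvi hvj l h1 h2) h3
  · by_cases hvj : R j v s₀
    · refine ⟨i, fun l hl => ?_⟩
      rcases hmiss v l hl with ⟨h1, -⟩ | ⟨-, h2⟩ | ⟨h1, h2, h3⟩
      · exact h1
      · exact absurd hvj h2
      · exact absurd (L3 v hvi hvj l h1 h2) h3
    · exact (L1 v hvi hvj).elim





lemma endgame3 (hr3 : r = 3)
    (R : Fin (r+1) → Fin n → Fin n → Prop)
    (hrefl : ∀ l v, R l v v)
    (hsymm : ∀ {l : Fin (r+1)} {u v : Fin n}, R l u v → R l v u)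
    (htrans : ∀ {l : Fin (r+1)} {u v w : Fin n}, R l u v → R l v w → R l u w)
    (hU2 : ∀ T : Finset (Fin n), T.card = r - 1 →
      ∃ l₁ l₂, l₁ ≠ l₂ ∧ (∀ u ∈ T, ∀ w ∈ T, R l₁ u w) ∧ (∀ u ∈ T, ∀ w ∈ T, R l₂ u w))
    (S : Finset (Fin n)) (hScard : S.card = r - 1)
    (i j : Fin (r+1)) (hij : i ≠ j)
    (hSi : ∀ u ∈ S, ∀ w ∈ S, R i u w) (hSj : ∀ u ∈ S, ∀ w ∈ S, R j u w)
    (hOnly : ∀ l, (∀ u ∈ S, ∀ w ∈ S, R l u w) → l = i ∨ l = j)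
    (s₀ : Fin n) (hs₀ : s₀ ∈ S)
    (c₀ : Fin n) (hc₀i : R i c₀ s₀) (hc₀j : ¬ R j c₀ s₀)
    (d₀ : Fin n) (hd₀i : ¬ R i d₀ s₀) (hd₀j : R j d₀ s₀) :
    ∃ pt : Fin (r+1) → Fin n,
      ∀ v : Fin n, ∃ ls, ∀ l, ¬ R l v (pt l) → l = ls := by
  obtain ⟨a, b, hab, hS⟩ : ∃ a b, a ≠ b ∧ S = {a, b} :=
    card_eq_two.mp (show S.card = 2 by rw [hScard]; omega)
  have haS : a ∈ S := by rw [hS]; simp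
  have hbS : b ∈ S := by rw [hS]; simp
  have hias : R i a s₀ := hSi a haS s₀ hs₀
  have hibs : R i b s₀ := hSi b hbS s₀ hs₀
  have hjas : R j a s₀ := hSj a haS s₀ hs₀
  have hjbs : R j b s₀ := hSj b hbS s₀ hs₀
  have card4 : Fintype.card (Fin (r+1)) = 4 := by rw [Fintype.card_fin]; omega
  have pairU2 : ∀ x y : Fin n, x ≠ y → ∃ l₁ l₂, l₁ ≠ l₂ ∧ R l₁ x y ∧ R l₂ x y := by
    intro x y hxy
    obtain ⟨l₁, l₂, hne, h1, h2⟩ := hU2 {x, y} (by rw [card_pair hxy]; omega)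
    exact ⟨l₁, l₂, hne, h1 x (by simp) y (by simp), h2 x (by simp) y (by simp)⟩
  have hnab : ∀ l, l ≠ i → l ≠ j → ¬ R l a b := by
    intro l h1 h2 hR
    have hcl : ∀ u ∈ S, ∀ w ∈ S, R l u w := by
      intro u hu w hw
      rw [hS, mem_insert, mem_singleton] at hu hw
      rcases hu with h | h <;> rcases hw with h' | h' <;> rw [h, h']
      · exact hrefl l a
      · exact hR
      · exact hsymm hR
      · exact hrefl l b
    rcases hOnly l hcl with h | h
    · exact h1 h
    · exact h2 h
  -- L1
  have L1 : ∀ v : Fin n, ¬ R i v s₀ → ¬ R j v s₀ → False := by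
    intro v hvi hvj
    have hva : v ≠ a := by intro h; rw [h] at hvi; exact hvi hias
    have hvb : v ≠ b := by intro h; rw [h] at hvi; exact hvi hibs
    obtain ⟨l₁, l₂, hne, h1, h2⟩ := pairU2 v a hva
    obtain ⟨w₁, w₂, hwe, g1, g2⟩ := pairU2 v b hvb
    have hlni : ∀ l', R l' v a → l' ≠ i := by
      intro l' hR h; rw [h] at hR; exact hvi (htrans hR hias)
    have hlnj : ∀ l', R l' v a → l' ≠ j := by
      intro l' hR h; rw [h] at hR; exact hvj (htrans hR hjas)
    have hwni : ∀ l', R l' v b → l' ≠ i := by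
      intro l' hR h; rw [h] at hR; exact hvi (htrans hR hibs)
    have hwnj : ∀ l', R l' v b → l' ≠ j := by
      intro l' hR h; rw [h] at hR; exact hvj (htrans hR hjbs)
    have hfin : ∀ l', R l' v a → R l' v b → False := by
      intro l' hRa hRb
      exact hnab l' (hlni l' hRa) (hlnj l' hRa) (htrans (hsymm hRa) hRb)
    rcases mem_of_four card4 hij (Ne.symm (hwni w₁ g1)) (Ne.symm (hwni w₂ g2))
      (Ne.symm (hwnj w₁ g1)) (Ne.symm (hwnj w₂ g2)) hwe l₁ with h | h | h | h
    · exact hlni l₁ h1 h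
    · exact hlnj l₁ h1 h
    · exact hfin l₁ h1 (h ▸ g1)
    · exact hfin l₁ h1 (h ▸ g2)
  -- L2
  have L2 : ∀ v, R i v s₀ → ¬ R j v s₀ → ∀ l, l ≠ i → l ≠ j → R l v c₀ := by
    intro v hvi hvj l hli hlj
    by_cases hvc : v = c₀
    · rw [hvc]; exact hrefl l c₀
    have hXd : ∀ x : Fin n, R i x s₀ → ¬ R j x s₀ → ∀ l', l' ≠ i → l' ≠ j → R l' x d₀ := by
      intro x hxi hxj l' hl'i hl'j
      have hxd : x ≠ d₀ := by intro h; rw [h] at hxi; exact hd₀i hxi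
      obtain ⟨l₁, l₂, hne, h1, h2⟩ := pairU2 x d₀ hxd
      have hni : ∀ l'', R l'' x d₀ → l'' ≠ i := by
        intro l'' hR h; rw [h] at hR; exact hd₀i (htrans (hsymm hR) hxi)
      have hnj : ∀ l'', R l'' x d₀ → l'' ≠ j := by
        intro l'' hR h; rw [h] at hR; exact hxj (htrans hR hd₀j)
      rcases mem_of_four card4 hij (Ne.symm (hni l₁ h1)) (Ne.symm (hni l₂ h2))
        (Ne.symm (hnj l₁ h1)) (Ne.symm (hnj l₂ h2)) hne l' with h | h | h | h
      · exact absurd h hl'i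
      · exact absurd h hl'j
      · exact h ▸ h1
      · exact h ▸ h2
    have h1 : R l v d₀ := hXd v hvi hvj l hli hlj
    have h2 : R l c₀ d₀ := hXd c₀ hc₀i hc₀j l hli hlj
    exact htrans h1 (hsymm h2)
  -- L3
  have L3 : ∀ v, ¬ R i v s₀ → R j v s₀ → ∀ l, l ≠ i → l ≠ j → R l v c₀ := by
    intro v hvi hvj l hli hlj
    have hvc : v ≠ c₀ := by intro h; rw [h] at hvi; exact hvi hc₀i
    obtain ⟨l₁, l₂, hne, h1, h2⟩ := pairU2 v c₀ hvc
    have hni : ∀ l'', R l'' v c₀ → l'' ≠ i := by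
      intro l'' hR h; rw [h] at hR; exact hvi (htrans hR hc₀i)
    have hnj : ∀ l'', R l'' v c₀ → l'' ≠ j := by
      intro l'' hR h; rw [h] at hR; exact hc₀j (htrans (hsymm hR) hvj)
    rcases mem_of_four card4 hij (Ne.symm (hni l₁ h1)) (Ne.symm (hni l₂ h2))
      (Ne.symm (hnj l₁ h1)) (Ne.symm (hnj l₂ h2)) hne l with h | h | h | h
    · exact absurd h hli
    · exact absurd h hlj
    · exact h ▸ h1
    · exact h ▸ h2
  -- L4
  have L4 : ∀ v, R i v s₀ → R j v s₀ → ∀ la, la ≠ i → la ≠ j → ∀ lb, lb ≠ i → lb ≠ j →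
      la ≠ lb → ¬ R la v c₀ → ¬ R lb v c₀ → False := by
    intro v hvi hvj la hlai hlaj lb hlbi hlbj hlab hnRa hnRb
    have hvc : v ≠ c₀ := by intro h; rw [h] at hvj; exact hc₀j hvj
    obtain ⟨w₁, w₂, hwe, g1, g2⟩ := pairU2 v c₀ hvc
    have keyi : ∀ w, R w v c₀ → w = i := by
      intro w hR
      have hwj : w ≠ j := by intro h; rw [h] at hR; exact hc₀j (htrans (hsymm hR) hvj)
      have hwa : w ≠ la := by intro h; rw [h] at hR; exact hnRa hR
      have hwb : w ≠ lb := by intro h; rw [h] at hR; exact hnRb hR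
      rcases mem_of_four card4 hij (Ne.symm hlai) (Ne.symm hlbi) (Ne.symm hlaj)
        (Ne.symm hlbj) hlab w with h | h | h | h
      · exact h
      · exact absurd h hwj
      · exact absurd h hwa
      · exact absurd h hwb
    exact hwe ((keyi w₁ g1).trans (keyi w₂ g2).symm)
  -- assemble the covering assignment
  refine ⟨fun l => if l = i ∨ l = j then s₀ else c₀, ?_⟩
  have hmiss : ∀ (v : Fin n) (l : Fin (r+1)), ¬ R l v (if l = i ∨ l = j then s₀ else c₀) →
      (l = i ∧ ¬ R i v s₀) ∨ (l = j ∧ ¬ R j v s₀) ∨ (l ≠ i ∧ l ≠ j ∧ ¬ R l v c₀) := by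
    intro v l h
    by_cases h1 : l = i
    · subst h1; rw [if_pos (Or.inl rfl)] at h; exact Or.inl ⟨rfl, h⟩
    by_cases h2 : l = j
    · subst h2; rw [if_pos (Or.inr rfl)] at h; exact Or.inr (Or.inl ⟨rfl, h⟩)
    · rw [if_neg (by tauto)] at h; exact Or.inr (Or.inr ⟨h1, h2, h⟩)
  intro v
  by_cases hvi : R i v s₀
  · by_cases hvj : R j v s₀
    · by_cases hall : ∀ l, l ≠ i → l ≠ j → R l v c₀
      · refine ⟨i, fun l hl => ?_⟩
        rcases hmiss v l hl with ⟨h1, -⟩ | ⟨-, h2⟩ | ⟨h1, h2, h3⟩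
        · exact h1
        · exact absurd hvj h2
        · exact absurd (hall l h1 h2) h3
      · push_neg at hall
        obtain ⟨la, hlai, hlaj, hnRa⟩ := hall
        refine ⟨la, fun l hl => ?_⟩
        rcases hmiss v l hl with ⟨-, h2⟩ | ⟨-, h2⟩ | ⟨h1, h2, h3⟩
        · exact absurd hvi h2
        · exact absurd hvj h2
        · by_contra hne
          exact L4 v hvi hvj l h1 h2 la hlai hlaj hne h3 hnRa
    · refine ⟨j, fun l hl => ?_⟩
      rcases hmiss v l hl with ⟨-, h2⟩ | ⟨h1, -⟩ | ⟨h1, h2, h3⟩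
      · exact absurd hvi h2
      · exact h1
      · exact absurd (L2 v hvi hvj l h1 h2) h3
  · by_cases hvj : R j v s₀
    · refine ⟨i, fun l hl => ?_⟩
      rcases hmiss v l hl with ⟨h1, -⟩ | ⟨-, h2⟩ | ⟨h1, h2, h3⟩
      · exact h1
      · exact absurd hvj h2
      · exact absurd (L3 v hvi hvj l h1 h2) h3
    · exact (L1 v hvi hvj).elim

lemma abstract (hr : 3 ≤ r) (hn : r ≤ n)
    (R : Fin (r+1) → Fin n → Fin n → Prop)
    (hrefl : ∀ l v, R l v v)
    (hsymm : ∀ {l : Fin (r+1)} {u v : Fin n}, R l u v → R l v u)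
    (htrans : ∀ {l : Fin (r+1)} {u v w : Fin n}, R l u v → R l v w → R l u w)
    (hsize : ∀ l v, (#(univ.filter (fun u => R l u v)) : ℚ) < r * n / (r+1))
    (hU2 : ∀ T : Finset (Fin n), T.card = r - 1 →
      ∃ l₁ l₂, l₁ ≠ l₂ ∧ (∀ u ∈ T, ∀ w ∈ T, R l₁ u w) ∧ (∀ u ∈ T, ∀ w ∈ T, R l₂ u w))
    (hZ : ∀ T : Finset (Fin n), T.card = r - 1 → ∀ (c : Fin (r+1)) (v : Fin n),
      (∀ t ∈ T, R c t v) → ∃ z, z ∉ T ∧ ¬ R c z v ∧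
        ∃ l, ∀ u ∈ insert z T, ∀ w ∈ insert z T, R l u w) :
    False := by
  obtain ⟨S, hScard, hSU⟩ := greedy hr hn R hrefl hsize
  obtain ⟨i, j, hij, hSi, hSj⟩ := hU2 S hScard
  have hOnly : ∀ l, (∀ u ∈ S, ∀ w ∈ S, R l u w) → l = i ∨ l = j := by
    intro l hcl
    have hsub : ({i, j} : Finset (Fin (r+1))) ⊆
        univ.filter (fun l => ∀ u ∈ S, ∀ w ∈ S, R l u w) := by
      intro x hx
      rcases mem_insert.mp hx with h | h
      · subst h; exact mem_filter.mpr ⟨mem_univ _, hSi⟩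
      · rw [mem_singleton] at h; subst h; exact mem_filter.mpr ⟨mem_univ _, hSj⟩
    have heq := eq_of_subset_of_card_le hsub (le_trans hSU (by rw [card_pair hij]))
    have hmem : l ∈ ({i, j} : Finset (Fin (r+1))) :=
      heq ▸ (mem_filter.mpr ⟨mem_univ _, hcl⟩)
    simpa using hmem
  have hSne : S.Nonempty := card_pos.mp (by rw [hScard]; omega)
  obtain ⟨s₀, hs₀⟩ := hSne
  obtain ⟨c₀, hc₀S, hc₀j, l₀, hl₀⟩ := hZ S hScard j s₀ (fun t ht => hSj t ht s₀ hs₀)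
  have hc₀i : R i c₀ s₀ := by
    have hclS : ∀ u ∈ S, ∀ w ∈ S, R l₀ u w :=
      fun u hu w hw => hl₀ u (mem_insert_of_mem hu) w (mem_insert_of_mem hw)
    have hRc : R l₀ c₀ s₀ := hl₀ c₀ (mem_insert_self _ _) s₀ (mem_insert_of_mem hs₀)
    rcases hOnly l₀ hclS with h | h
    · rwa [h] at hRc
    · rw [h] at hRc; exact absurd hRc hc₀j
  obtain ⟨d₀, hd₀S, hd₀i, l₁, hl₁⟩ := hZ S hScard i s₀ (fun t ht => hSi t ht s₀ hs₀)
  have hd₀j : R j d₀ s₀ := by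
    have hclS : ∀ u ∈ S, ∀ w ∈ S, R l₁ u w :=
      fun u hu w hw => hl₁ u (mem_insert_of_mem hu) w (mem_insert_of_mem hw)
    have hRd : R l₁ d₀ s₀ := hl₁ d₀ (mem_insert_self _ _) s₀ (mem_insert_of_mem hs₀)
    rcases hOnly l₁ hclS with h | h
    · rw [h] at hRd; exact absurd hRd hd₀i
    · rwa [h] at hRd
  have hn0 : 0 < n := by omega
  rcases Nat.lt_or_ge r 4 with h4 | h4
  · have hr3 : r = 3 := by omega
    obtain ⟨pt, hcov⟩ := endgame3 hr3 R hrefl @hsymm @htrans hU2 S hScard i j hij hSi hSj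
      hOnly s₀ hs₀ c₀ hc₀i hc₀j d₀ hd₀i hd₀j
    exact count_final hn0 R hsize pt hcov
  · obtain ⟨pt, hcov⟩ := endgame4 h4 R hrefl @hsymm @htrans hU2 S hScard i j hij hSi hSj
      hOnly s₀ hs₀ c₀ hc₀S hc₀i hc₀j
    exact count_final hn0 R hsize pt hcov

end Stmt4Aux

theorem stmt4 (n r : ℕ) (hr : 3 ≤ r) (hn : r ≤ n)
    (E : Finset (Finset (Fin n))) (huni : ∀ e ∈ E, e.card = r)
    (hdeg : ∀ S : Finset (Fin n), S.card = r - 1 →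
      (r : ℚ) * n / (r + 1) - ((r : ℚ) - 1) ≤ {e | e ∈ E ∧ S ⊆ e}.ncard)
    (χ : Finset (Fin n) → Fin (r + 1)) :
    ∃ (c : Fin (r + 1)) (v : Fin n),
      (r : ℚ) * n / (r + 1) ≤ (compOf {e | e ∈ E ∧ χ e = c} v).ncard := by
  by_contra hcon
  push_neg at hcon
  set R : Fin (r+1) → Fin n → Fin n → Prop :=
    fun c u v => connBy {e | e ∈ E ∧ χ e = c} u v with hRdef
  have hrefl : ∀ (l : Fin (r+1)) (v : Fin n), R l v v := fun l v => Relation.ReflTransGen.refl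
  have hsymm : ∀ {l : Fin (r+1)} {u v : Fin n}, R l u v → R l v u := by
    intro l u v h
    exact (@Relation.ReflTransGen.symmetric _ _ ⟨fun x y ⟨e, he, hx, hy⟩ => ⟨e, he, hy, hx⟩⟩).symm _ _ h
  have htrans : ∀ {l : Fin (r+1)} {u v w : Fin n}, R l u v → R l v w → R l u w :=
    fun h1 h2 => Relation.ReflTransGen.trans h1 h2
  have hclasscard : ∀ (l : Fin (r+1)) (v : Fin n),
      #(univ.filter (fun u => R l u v)) = (compOf {e | e ∈ E ∧ χ e = l} v).ncard := by
    intro l v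
    rw [Set.ncard_eq_toFinset_card']
    congr 1
    ext u
    simp only [mem_filter, mem_univ, true_and, Set.mem_toFinset]
    exact Iff.rfl
  have hsize : ∀ (l : Fin (r+1)) (v : Fin n),
      (#(univ.filter (fun u => R l u v)) : ℚ) < (r:ℚ) * n / (r+1) := by
    intro l v
    rw [hclasscard]
    exact hcon l v
  have hedge : ∀ e ∈ E, ∀ u ∈ e, ∀ w ∈ e, R (χ e) u w := by
    intro e he u hu w hw
    exact Relation.ReflTransGen.single ⟨e, ⟨he, rfl⟩, hu, hw⟩
  have hrQ : (3:ℚ) ≤ (r:ℚ) := by exact_mod_cast hr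
  have hnQ : (r:ℚ) ≤ (n:ℚ) := by exact_mod_cast hn
  have hrp : (0:ℚ) < (r:ℚ) + 1 := by linarith
  have hm1 : ((r:ℚ) - 1) < (r:ℚ) * n / (r+1) := by
    rw [lt_div_iff₀ hrp]
    nlinarith
  have hr1c : ((r - 1 : ℕ) : ℚ) = (r:ℚ) - 1 := by
    rw [Nat.cast_sub (by omega : 1 ≤ r), Nat.cast_one]
  -- extension structure for (r-1)-sets
  have hext : ∀ T : Finset (Fin n), T.card = r - 1 →
      ∃ F : Finset (Finset (Fin n)), ((r:ℚ) * n / (r+1) - ((r:ℚ)-1) ≤ (F.card : ℚ)) ∧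
        F.Nonempty ∧ ∃ zf : Finset (Fin n) → Fin n, Set.InjOn zf ↑F ∧
          (∀ e ∈ F, e ∈ E ∧ T ⊆ e ∧ zf e ∉ T ∧ zf e ∈ e ∧ e = insert (zf e) T) := by
    intro T hT
    have hFcard : (r:ℚ) * n / (r+1) - ((r:ℚ)-1) ≤ ((E.filter (fun e => T ⊆ e)).card : ℚ) := by
      have h := hdeg T hT
      have hsetF : {e | e ∈ E ∧ T ⊆ e}
          = (↑(E.filter (fun e => T ⊆ e)) : Set (Finset (Fin n))) := by
        ext e; simp [mem_filter]
      rwa [hsetF, Set.ncard_coe_finset] at h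
    have hFpos : 0 < (E.filter (fun e => T ⊆ e)).card := by
      by_contra h
      have h0 : (E.filter (fun e => T ⊆ e)).card = 0 := by omega
      rw [h0] at hFcard
      push_cast at hFcard
      linarith
    have hTne : T.Nonempty := card_pos.mp (by omega)
    obtain ⟨t₀, ht₀⟩ := hTne
    have hzsig : ∀ e, ∃ z, e ∈ E.filter (fun e => T ⊆ e) → e \ T = {z} := by
      intro e
      by_cases he : e ∈ E.filter (fun e => T ⊆ e)
      · have hTe : T ⊆ e := (mem_filter.mp he).2
        have hce : e.card = r := huni e (mem_filter.mp he).1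
        have h1 : (e \ T).card = 1 := by rw [card_sdiff_of_subset hTe, hce, hT]; omega
        obtain ⟨z, hz⟩ := card_eq_one.mp h1
        exact ⟨z, fun _ => hz⟩
      · exact ⟨t₀, fun h => absurd h he⟩
    choose zf hzf using hzsig
    have hmemz : ∀ e ∈ E.filter (fun e => T ⊆ e), zf e ∈ e \ T := by
      intro e he; rw [hzf e he]; exact mem_singleton_self _
    have hrec : ∀ e ∈ E.filter (fun e => T ⊆ e), e = insert (zf e) T := by
      intro e he
      have hTe : T ⊆ e := (mem_filter.mp he).2
      have hu : T ∪ (e \ T) = e := union_sdiff_of_subset hTe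
      rw [hzf e he] at hu
      have huni2 : ∀ a : Fin n, T ∪ {a} = insert a T := by
        intro a; rw [Finset.insert_eq, Finset.union_comm]
      exact hu.symm.trans (huni2 (zf e))
    refine ⟨E.filter (fun e => T ⊆ e), hFcard, card_pos.mp hFpos, zf, ?_, ?_⟩
    · intro e he e' he' heq
      rw [Finset.mem_coe] at he he'
      rw [hrec e he, hrec e' he', heq]
    · intro e he
      exact ⟨(mem_filter.mp he).1, (mem_filter.mp he).2,
        (mem_sdiff.mp (hmemz e he)).2, (mem_sdiff.mp (hmemz e he)).1, hrec e he⟩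
  -- hU2
  have hU2 : ∀ T : Finset (Fin n), T.card = r - 1 →
      ∃ l₁ l₂, l₁ ≠ l₂ ∧ (∀ u ∈ T, ∀ w ∈ T, R l₁ u w) ∧ (∀ u ∈ T, ∀ w ∈ T, R l₂ u w) := by
    intro T hT
    obtain ⟨F, hFcard, hFne, zf, hinj, hprop⟩ := hext T hT
    by_cases hcol : ∃ e ∈ F, ∃ e' ∈ F, χ e ≠ χ e'
    · obtain ⟨e, he, e', he', hne⟩ := hcol
      obtain ⟨heE, hTe, -, -, -⟩ := hprop e he
      obtain ⟨heE', hTe', -, -, -⟩ := hprop e' he'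
      exact ⟨χ e, χ e', hne,
        fun u hu w hw => hedge e heE u (hTe hu) w (hTe hw),
        fun u hu w hw => hedge e' heE' u (hTe' hu) w (hTe' hw)⟩
    · exfalso
      push_neg at hcol
      obtain ⟨e₀, he₀⟩ := hFne
      obtain ⟨he₀E, hTe₀, -, -, -⟩ := hprop e₀ he₀
      obtain ⟨t₀, ht₀⟩ : T.Nonempty := card_pos.mp (by omega)
      have hzcl : ∀ e ∈ F, R (χ e₀) (zf e) t₀ := by
        intro e he
        obtain ⟨heE, hTe, hzT, hze, hins⟩ := hprop e he
        have h1 : R (χ e) (zf e) t₀ := hedge e heE (zf e) hze t₀ (hTe ht₀)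
        rwa [hcol e he e₀ he₀] at h1
      have hTcl : ∀ x ∈ T, R (χ e₀) x t₀ := fun x hx => hedge e₀ he₀E x (hTe₀ hx) t₀ (hTe₀ ht₀)
      have hsub : F.image zf ∪ T ⊆ univ.filter (fun u => R (χ e₀) u t₀) := by
        intro x hx
        rcases mem_union.mp hx with hx | hx
        · obtain ⟨e, he, rfl⟩ := mem_image.mp hx
          exact mem_filter.mpr ⟨mem_univ _, hzcl e he⟩
        · exact mem_filter.mpr ⟨mem_univ _, hTcl x hx⟩
      have hdisj : Disjoint (F.image zf) T := by
        rw [disjoint_left]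
        intro x hx hxT
        obtain ⟨e, he, rfl⟩ := mem_image.mp hx
        exact (hprop e he).2.2.1 hxT
      have hcard : F.card + (r - 1) ≤ #(univ.filter (fun u => R (χ e₀) u t₀)) := by
        calc F.card + (r - 1) = (F.image zf).card + T.card := by
              rw [card_image_of_injOn hinj, hT]
          _ = (F.image zf ∪ T).card := (card_union_of_disjoint hdisj).symm
          _ ≤ _ := card_le_card hsub
      have hq : (r:ℚ) * n / (r+1) ≤ (#(univ.filter (fun u => R (χ e₀) u t₀)) : ℚ) := by
        have h2 : ((F.card + (r-1) : ℕ) : ℚ)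
            ≤ (#(univ.filter (fun u => R (χ e₀) u t₀)) : ℚ) := by exact_mod_cast hcard
        rw [Nat.cast_add, hr1c] at h2
        linarith
      exact absurd (hsize (χ e₀) t₀) (not_lt.mpr hq)
  -- hZ
  have hZ : ∀ T : Finset (Fin n), T.card = r - 1 → ∀ (c : Fin (r+1)) (v : Fin n),
      (∀ t ∈ T, R c t v) → ∃ z, z ∉ T ∧ ¬ R c z v ∧
        ∃ l, ∀ u ∈ insert z T, ∀ w ∈ insert z T, R l u w := by
    intro T hT c v hTv
    obtain ⟨F, hFcard, hFne, zf, hinj, hprop⟩ := hext T hT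
    have hout : ∃ e ∈ F, ¬ R c (zf e) v := by
      by_contra hall
      push_neg at hall
      have hsub : F.image zf ∪ T ⊆ univ.filter (fun u => R c u v) := by
        intro x hx
        rcases mem_union.mp hx with hx | hx
        · obtain ⟨e, he, rfl⟩ := mem_image.mp hx
          exact mem_filter.mpr ⟨mem_univ _, hall e he⟩
        · exact mem_filter.mpr ⟨mem_univ _, hTv x hx⟩
      have hdisj : Disjoint (F.image zf) T := by
        rw [disjoint_left]
        intro x hx hxT
        obtain ⟨e, he, rfl⟩ := mem_image.mp hx
        exact (hprop e he).2.2.1 hxT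
      have hcard : F.card + (r - 1) ≤ #(univ.filter (fun u => R c u v)) := by
        calc F.card + (r - 1) = (F.image zf).card + T.card := by
              rw [card_image_of_injOn hinj, hT]
          _ = (F.image zf ∪ T).card := (card_union_of_disjoint hdisj).symm
          _ ≤ _ := card_le_card hsub
      have hq : (r:ℚ) * n / (r+1) ≤ (#(univ.filter (fun u => R c u v)) : ℚ) := by
        have h2 : ((F.card + (r-1) : ℕ) : ℚ)
            ≤ (#(univ.filter (fun u => R c u v)) : ℚ) := by exact_mod_cast hcard
        rw [Nat.cast_add, hr1c] at h2
        linarith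
      exact absurd (hsize c v) (not_lt.mpr hq)
    obtain ⟨e, he, hzv⟩ := hout
    obtain ⟨heE, hTe, hzT, hze, hins⟩ := hprop e he
    refine ⟨zf e, hzT, hzv, χ e, fun u hu w hw => ?_⟩
    exact hedge e heE u (by rw [hins]; exact hu) w (by rw [hins]; exact hw)
  exact Stmt4Aux.abstract hr hn R hrefl @hsymm @htrans hsize hU2 hZ
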